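/- arXiv:2604.14670 — 2 statements merged into one kernel-verified Lean document; each statement's English description precedes it below -/
import Mathlib

section
/- A finite simple graph G admits an orientation in which every vertex has out-degree at most k if and only if Mad(G) ≤ 2k. -/
/-!
An orientation of a simple graph assigns to each edge one of its two endpoints as the
*tail* (the edge is directed away from the tail).  The out-degree of `v` is the number of
edges whose tail is `v`.  An orientation is proper if adjacent vertices get distinct
out-degrees.  The proper orientation number is the least possible maximum out-degree of a
proper orientation, and `mad G` is the maximum average degree of `G`.
-/

/-- An orientation of a simple graph `G`: each edge is assigned a tail (source endpoint),
i.e. one of its two possible directions. -/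
structure GraphOrientation {V : Type*} (G : SimpleGraph V) where
  tail : G.edgeSet → V
  tail_mem : ∀ e : G.edgeSet, tail e ∈ (e : Sym2 V)

/-- The out-degree of a vertex `v`: the number of edges directed away from `v`. -/
noncomputable def GraphOrientation.outDeg {V : Type*} {G : SimpleGraph V}
    (D : GraphOrientation G) (v : V) : ℕ :=
  {e : G.edgeSet | D.tail e = v}.ncard

/-- An orientation is proper if adjacent vertices have distinct out-degrees. -/
def GraphOrientation.Proper {V : Type*} {G : SimpleGraph V} (D : GraphOrientation G) : Prop :=
  ∀ ⦃u v : V⦄, G.Adj u v → D.outDeg u ≠ D.outDeg v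

/-- The maximum out-degree `Δ⁺(D)` of an orientation `D`. -/
noncomputable def GraphOrientation.maxOutDeg {V : Type*} [Fintype V] {G : SimpleGraph V}
    (D : GraphOrientation G) : ℕ :=
  Finset.univ.sup D.outDeg

/-- The proper orientation number `χ⃗(G)`: the minimum of `Δ⁺(D)` over all proper
orientations `D` of `G`. -/
noncomputable def properOrientNum {V : Type*} [Fintype V] (G : SimpleGraph V) : ℕ :=
  sInf {n : ℕ | ∃ D : GraphOrientation G, D.Proper ∧ D.maxOutDeg = n}

/-- The maximum average degree `Mad(G)`: the maximum of `2|E(H)|/|V(H)|` over all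
subgraphs `H` of `G` with nonempty vertex set. -/
noncomputable def mad {V : Type*} (G : SimpleGraph V) : ℝ :=
  sSup {x : ℝ | ∃ H : G.Subgraph, H.verts.Nonempty ∧
    x = 2 * (H.edgeSet.ncard : ℝ) / (H.verts.ncard : ℝ)}


open Classical in
lemma exists_pair_inj {V : Type*} [Fintype V] {G : SimpleGraph V} (D : GraphOrientation G) {k : ℕ}
    (hk : ∀ v, D.outDeg v ≤ k) :
    ∃ f : G.edgeSet → V × Fin k, Function.Injective f ∧ ∀ e, (f e).1 = D.tail e := by
  haveI : Finite (Sym2 V) := inferInstance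
  haveI : Finite ↥G.edgeSet := Subtype.finite
  have hemb : ∀ v : V, Nonempty ({e : G.edgeSet // D.tail e = v} ↪ Fin k) := by
    intro v
    haveI : Fintype {e : G.edgeSet // D.tail e = v} := Fintype.ofFinite _
    refine Function.Embedding.nonempty_of_card_le ?_
    rw [Fintype.card_fin, ← Nat.card_eq_fintype_card]
    have h : Nat.card {e : G.edgeSet // D.tail e = v}
        = ({e : G.edgeSet | D.tail e = v} : Set G.edgeSet).ncard :=
      (Nat.card_coe_set_eq _)
    rw [h]; exact hk v
  have emb := fun v => Classical.choice (hemb v)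
  let F : (Σ v : V, {e : G.edgeSet // D.tail e = v}) → (Σ _ : V, Fin k) :=
    @Sigma.map V V (fun v => {e : G.edgeSet // D.tail e = v}) (fun _ => Fin k) id
      (fun v x => emb v x)
  have hF : Function.Injective F :=
    Function.Injective.sigma_map Function.injective_id fun v => (emb v).injective
  refine ⟨fun e => (Equiv.sigmaEquivProd V (Fin k))
      (F ((Equiv.sigmaFiberEquiv D.tail).symm e)), ?_, ?_⟩
  · intro a b hab
    exact (Equiv.sigmaFiberEquiv D.tail).symm.injective
      (hF ((Equiv.sigmaEquivProd V (Fin k)).injective hab))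
  · intro e; rfl

open Classical in
lemma subgraph_bound_of_orient {V : Type*} [Fintype V] {G : SimpleGraph V}
    (D : GraphOrientation G) {k : ℕ} (hk : ∀ v, D.outDeg v ≤ k) (H : G.Subgraph) :
    H.edgeSet.ncard ≤ k * H.verts.ncard := by
  haveI : Finite (Sym2 V) := inferInstance
  obtain ⟨f, hinj, hfst⟩ := exists_pair_inj D hk
  let ψ : ↥H.edgeSet → ↥H.verts × Fin k := fun e =>
    (⟨(f ⟨e.1, H.edgeSet_subset e.2⟩).1, by
        rw [hfst]; exact H.mem_verts_of_mem_edge e.2 (D.tail_mem _)⟩,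
      (f ⟨e.1, H.edgeSet_subset e.2⟩).2)
  have hψ : Function.Injective ψ := by
    intro a b h
    have h1 := congrArg (fun p => (p.1 : V)) h
    have h2 := congrArg Prod.snd h
    simp only [ψ] at h1 h2
    have : f ⟨a.1, H.edgeSet_subset a.2⟩ = f ⟨b.1, H.edgeSet_subset b.2⟩ :=
      Prod.ext h1 h2
    have h4 := hinj this
    rw [Subtype.mk_eq_mk] at h4
    exact Subtype.ext h4
  calc H.edgeSet.ncard = Nat.card ↥H.edgeSet := (Nat.card_coe_set_eq _).symm
    _ ≤ Nat.card (↥H.verts × Fin k) := Nat.card_le_card_of_injective ψ hψ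
    _ = Nat.card ↥H.verts * Nat.card (Fin k) := Nat.card_prod _ _
    _ = k * H.verts.ncard := by
        rw [Nat.card_coe_set_eq, Nat.card_eq_fintype_card, Fintype.card_fin, mul_comm]

open Classical in
lemma orient_of_bound {V : Type*} [Fintype V] {G : SimpleGraph V} {k : ℕ}
    (hb : ∀ H : G.Subgraph, H.edgeSet.ncard ≤ k * H.verts.ncard) :
    ∃ D : GraphOrientation G, ∀ v, D.outDeg v ≤ k := by
  haveI : Finite (Sym2 V) := inferInstance
  haveI : Finite ↥G.edgeSet := Subtype.finite
  let t : G.edgeSet → Finset (V × Fin k) := fun e =>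
    (Finset.univ.filter (· ∈ (e : Sym2 V))) ×ˢ Finset.univ
  have hall : ∀ s : Finset G.edgeSet, s.card ≤ (s.biUnion t).card := by
    intro s
    set Vs : Finset V := s.biUnion (fun e => Finset.univ.filter (· ∈ (e : Sym2 V))) with hVs
    have hbiU : s.biUnion t = Vs ×ˢ Finset.univ := by
      ext ⟨v, i⟩
      simp only [t, hVs, Finset.mem_biUnion, Finset.mem_product, Finset.mem_filter,
        Finset.mem_univ, true_and, and_true]
    let H : G.Subgraph :=
      { verts := ↑Vs
        Adj := fun u v => ∃ e ∈ s, (e : Sym2 V) = s(u, v)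
        adj_sub := by rintro u v ⟨e, _, he⟩; exact G.mem_edgeSet.mp (he ▸ e.2)
        edge_vert := by
          rintro u v ⟨e, hs, he⟩
          simp only [hVs, Finset.coe_biUnion, Set.mem_iUnion, Finset.coe_filter,
            Set.mem_setOf_eq, Finset.mem_univ, true_and, Finset.mem_coe]
          exact ⟨e, hs, by rw [he]; exact Sym2.mem_mk_left u v⟩
        symm := by constructor; rintro u v ⟨e, hs, he⟩; exact ⟨e, hs, he.trans Sym2.eq_swap⟩ }
    have hedges : H.edgeSet = Subtype.val '' (↑s : Set G.edgeSet) := by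
      ext e
      induction e using Sym2.ind with
      | _ u v =>
        simp only [SimpleGraph.Subgraph.mem_edgeSet, Set.mem_image, Finset.mem_coe]
        exact Iff.rfl
    have hcard : s.card = H.edgeSet.ncard := by
      rw [hedges, Set.ncard_image_of_injective _ Subtype.val_injective, Set.ncard_coe_finset]
    have hverts : H.verts.ncard = Vs.card := Set.ncard_coe_finset _
    have hle : s.card ≤ k * Vs.card := by rw [hcard, ← hverts]; exact hb H
    rw [hbiU, Finset.card_product, Finset.card_univ, Fintype.card_fin]
    simpa [mul_comm] using hle
  obtain ⟨f, hfinj, hft⟩ := (Finset.all_card_le_biUnion_card_iff_exists_injective t).mp hall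
  have hmem : ∀ e : G.edgeSet, (f e).1 ∈ (e : Sym2 V) := by
    intro e
    have := hft e
    simp only [t, Finset.mem_product, Finset.mem_filter, Finset.mem_univ, true_and,
      and_true] at this
    exact this
  refine ⟨⟨fun e => (f e).1, hmem⟩, fun v => ?_⟩
  show ({e : G.edgeSet | (f e).1 = v}).ncard ≤ k
  rw [← Nat.card_coe_set_eq]
  have hinj : Function.Injective
      (fun x : {e : G.edgeSet | (f e).1 = v} => (f x.1).2) := by
    intro a b h
    apply Subtype.ext
    apply hfinj
    exact Prod.ext (a.2.trans b.2.symm) h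
  calc Nat.card {e : G.edgeSet | (f e).1 = v} ≤ Nat.card (Fin k) :=
        Nat.card_le_card_of_injective _ hinj
    _ = k := by simp

lemma mad_le_of_bound {V : Type*} [Fintype V] {G : SimpleGraph V} {k : ℕ}
    (hb : ∀ H : G.Subgraph, H.edgeSet.ncard ≤ k * H.verts.ncard) : mad G ≤ 2 * k := by
  apply Real.sSup_le
  · rintro x ⟨H, hne, rfl⟩
    have hv : 0 < (H.verts.ncard : ℝ) := by
      exact_mod_cast (Set.ncard_pos (Set.toFinite _)).mpr hne
    rw [div_le_iff₀ hv]
    have h2 : (H.edgeSet.ncard : ℝ) ≤ (k : ℝ) * H.verts.ncard := by exact_mod_cast hb H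
    linarith
  · positivity

lemma bound_of_mad_le {V : Type*} [Fintype V] {G : SimpleGraph V} {k : ℕ}
    (h : mad G ≤ 2 * k) (H : G.Subgraph) : H.edgeSet.ncard ≤ k * H.verts.ncard := by
  haveI : Finite (Sym2 V) := inferInstance
  by_cases hne : H.verts.Nonempty
  · have hBdd : BddAbove {x : ℝ | ∃ H : G.Subgraph, H.verts.Nonempty ∧
        x = 2 * (H.edgeSet.ncard : ℝ) / (H.verts.ncard : ℝ)} := by
      refine ⟨2 * (Nat.card (Sym2 V) : ℝ), ?_⟩
      rintro x ⟨H', hne', rfl⟩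
      have hv1 : 1 ≤ (H'.verts.ncard : ℝ) := by
        exact_mod_cast (Set.ncard_pos (Set.toFinite _)).mpr hne'
      have hE : (H'.edgeSet.ncard : ℝ) ≤ (Nat.card (Sym2 V) : ℝ) := by
        exact_mod_cast le_trans (Set.ncard_le_ncard (Set.subset_univ _) Set.finite_univ)
          (le_of_eq (Set.ncard_univ _))
      calc 2 * (H'.edgeSet.ncard : ℝ) / (H'.verts.ncard : ℝ)
          ≤ 2 * (H'.edgeSet.ncard : ℝ) := div_le_self (by positivity) hv1
        _ ≤ 2 * (Nat.card (Sym2 V) : ℝ) := by linarith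
    have hv : 0 < (H.verts.ncard : ℝ) := by
      exact_mod_cast (Set.ncard_pos (Set.toFinite _)).mpr hne
    have hx : 2 * (H.edgeSet.ncard : ℝ) / (H.verts.ncard : ℝ) ≤ mad G :=
      le_csSup hBdd ⟨H, hne, rfl⟩
    have h2 := hx.trans h
    rw [div_le_iff₀ hv] at h2
    have h3 : (H.edgeSet.ncard : ℝ) ≤ (k : ℝ) * H.verts.ncard := by linarith
    exact_mod_cast h3
  · have hv0 : H.verts = ∅ := Set.not_nonempty_iff_eq_empty.mp hne
    have hE0 : H.edgeSet = ∅ := by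
      ext e
      induction e using Sym2.ind with
      | _ u v =>
        simp only [SimpleGraph.Subgraph.mem_edgeSet, Set.mem_empty_iff_false, iff_false]
        intro ha
        exact absurd (H.edge_vert ha) (by simp [hv0])
    simp [hE0]


/-- Hakimi's theorem: a finite simple graph `G` admits an orientation in which every
vertex has out-degree at most `k` if and only if `Mad(G) ≤ 2k`. -/
theorem exists_orientation_maxOutDeg_le_iff_mad_le {V : Type*} [Fintype V]
    (G : SimpleGraph V) (k : ℕ) :
    (∃ D : GraphOrientation G, ∀ v : V, D.outDeg v ≤ k) ↔ mad G ≤ 2 * k := by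
  constructor
  · rintro ⟨D, hD⟩
    exact mad_le_of_bound fun H => subgraph_bound_of_orient D hD H
  · intro h
    exact orient_of_bound fun H => bound_of_mad_le h H
end

section
/- For every positive integer k, the complete bipartite graph K_{2k−1,2k−1} satisfies χ⃗(K_{2k−1,2k−1}) = k: there is a proper orientation in which every vertex of one part has out-degree k and every vertex of the other part has out-degree k − 1, and no proper orientation has maximum out-degree less than k. -/
section
open Finset

lemma card_filter_val_lt {n k : ℕ} (hk : k ≤ n) :
    (Finset.univ.filter fun w : Fin n => (w : ℕ) < k).card = k := by
  rcases lt_or_eq_of_le hk with h' | h'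
  · have : (Finset.univ.filter fun w : Fin n => (w : ℕ) < k) = Finset.Iio ⟨k, h'⟩ := by
      ext w; simp [Fin.lt_def]
    rw [this, Fin.card_Iio]
  · subst h'
    rw [Finset.filter_true_of_mem (fun w _ => w.isLt), Finset.card_univ, Fintype.card_fin]

lemma count_sub_lt {n : ℕ} [NeZero n] (u : Fin n) (k : ℕ) (hk : k ≤ n) :
    (univ.filter fun v : Fin n => ((v - u : Fin n) : ℕ) < k).card = k := by
  have h := Finset.card_equiv (Equiv.subRight u)
    (s := univ.filter fun v : Fin n => ((v - u : Fin n) : ℕ) < k)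
    (t := univ.filter fun w : Fin n => (w : ℕ) < k) (by intro v; simp [Equiv.subRight])
  rw [h, card_filter_val_lt hk]

lemma count_sub_lt' {n : ℕ} [NeZero n] (v : Fin n) (k : ℕ) (hk : k ≤ n) :
    (univ.filter fun u : Fin n => ((v - u : Fin n) : ℕ) < k).card = k := by
  have h := Finset.card_equiv (Equiv.subLeft v)
    (s := univ.filter fun u : Fin n => ((v - u : Fin n) : ℕ) < k)
    (t := univ.filter fun w : Fin n => (w : ℕ) < k) (by intro u; simp [Equiv.subLeft])
  rw [h, card_filter_val_lt hk]

def bf (k : ℕ) : Fin (2*k-1) ⊕ Fin (2*k-1) → Fin (2*k-1) ⊕ Fin (2*k-1) → Fin (2*k-1) ⊕ Fin (2*k-1)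
  | .inl u, .inl u' => .inl (min u u')
  | .inl u, .inr v => if ((v - u : Fin (2*k-1)) : ℕ) < k then .inl u else .inr v
  | .inr v, .inl u => if ((v - u : Fin (2*k-1)) : ℕ) < k then .inl u else .inr v
  | .inr v, .inr v' => .inr (min v v')

lemma bf_comm (k : ℕ) : ∀ x y, bf k x y = bf k y x := by
  rintro (u|v) (u'|v') <;> simp [bf, min_comm]

noncomputable def bD (k : ℕ) :
    GraphOrientation (completeBipartiteGraph (Fin (2*k-1)) (Fin (2*k-1))) where
  tail e := Sym2.lift ⟨bf k, bf_comm k⟩ (e : Sym2 (Fin (2*k-1) ⊕ Fin (2*k-1)))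
  tail_mem := by
    rintro ⟨e, he⟩
    induction e using Sym2.ind with
    | _ x y =>
      simp only [Sym2.lift_mk]
      rcases x with u|v <;> rcases y with u'|v' <;> rw [Sym2.mem_iff] <;> simp only [bf]
      · rcases min_choice u u' with h | h <;> rw [h] <;> simp
      · split_ifs <;> simp
      · split_ifs <;> simp
      · rcases min_choice v v' with h | h <;> rw [h] <;> simp

lemma g_bij (k : ℕ) :
    Function.Bijective (fun p : Fin (2*k-1) × Fin (2*k-1) =>
      (⟨s(Sum.inl p.1, Sum.inr p.2), by simp⟩ :
        (completeBipartiteGraph (Fin (2*k-1)) (Fin (2*k-1))).edgeSet)) := by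
  constructor
  · rintro ⟨u, v⟩ ⟨u', v'⟩ h
    simp only [Subtype.mk.injEq, Sym2.eq, Sym2.rel_iff', Prod.mk.injEq, Prod.swap_prod_mk,
      Sum.inl.injEq, Sum.inr.injEq] at h
    rcases h with ⟨h1, h2⟩ | ⟨h1, h2⟩
    · simp_all
    · simp_all
  · rintro ⟨e, he⟩
    induction e using Sym2.ind with
    | _ x y =>
      rw [SimpleGraph.mem_edgeSet] at he
      rcases x with u|v <;> rcases y with u'|v' <;> simp at he
      · exact ⟨(u, v'), rfl⟩
      · exact ⟨(u', v), Subtype.ext (Sym2.eq_swap)⟩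
end

section
open Finset

lemma bD_outDeg_eq (k : ℕ) (x : Fin (2*k-1) ⊕ Fin (2*k-1)) :
    (bD k).outDeg x = (univ.filter fun p : Fin (2*k-1) × Fin (2*k-1) =>
      bf k (.inl p.1) (.inr p.2) = x).card := by
  classical
  set g := fun p : Fin (2*k-1) × Fin (2*k-1) =>
    (⟨s(Sum.inl p.1, Sum.inr p.2), by simp⟩ :
      (completeBipartiteGraph (Fin (2*k-1)) (Fin (2*k-1))).edgeSet) with hgdef
  have hg := g_bij k
  rw [GraphOrientation.outDeg]
  have himg : {e | (bD k).tail e = x} = g '' {p | (bD k).tail (g p) = x} := by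
    rw [show {p | (bD k).tail (g p) = x} = g ⁻¹' {e | (bD k).tail e = x} from rfl,
      Set.image_preimage_eq _ hg.surjective]
  rw [himg, Set.ncard_image_of_injective _ hg.injective]
  have h2 : {p | (bD k).tail (g p) = x}
      = ↑(univ.filter fun p : Fin (2*k-1) × Fin (2*k-1) => bf k (.inl p.1) (.inr p.2) = x) := by
    ext p; simp [bD, hgdef]
  rw [h2, Set.ncard_coe_finset]

lemma bD_outDeg_inl (k : ℕ) (hk : 1 ≤ k) (u₀ : Fin (2*k-1)) :
    (bD k).outDeg (Sum.inl u₀) = k := by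
  haveI : NeZero (2*k-1) := ⟨by omega⟩
  rw [bD_outDeg_eq]
  have h : (univ.filter fun p : Fin (2*k-1) × Fin (2*k-1) =>
        bf k (.inl p.1) (.inr p.2) = .inl u₀)
      = {u₀} ×ˢ (univ.filter fun v : Fin (2*k-1) => ((v - u₀ : Fin (2*k-1)) : ℕ) < k) := by
    ext ⟨u, v⟩
    rw [Finset.mem_filter]
    simp only [bf, Finset.mem_filter, Finset.mem_univ, true_and, Finset.mem_product,
      Finset.mem_singleton]
    constructor
    · intro hm
      split_ifs at hm with h
      injection hm with h2; subst h2; exact ⟨rfl, h⟩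
    · rintro ⟨rfl, hv⟩; rw [if_pos hv]
  rw [h, Finset.card_product, Finset.card_singleton, one_mul, count_sub_lt u₀ k (by omega)]

lemma bD_outDeg_inr (k : ℕ) (hk : 1 ≤ k) (v₀ : Fin (2*k-1)) :
    (bD k).outDeg (Sum.inr v₀) = k - 1 := by
  haveI : NeZero (2*k-1) := ⟨by omega⟩
  rw [bD_outDeg_eq]
  have h : (univ.filter fun p : Fin (2*k-1) × Fin (2*k-1) =>
        bf k (.inl p.1) (.inr p.2) = .inr v₀)
      = (univ.filter fun u : Fin (2*k-1) => ¬ ((v₀ - u : Fin (2*k-1)) : ℕ) < k) ×ˢ {v₀} := by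
    ext ⟨u, v⟩
    rw [Finset.mem_filter]
    simp only [bf, Finset.mem_filter, Finset.mem_univ, true_and, Finset.mem_product,
      Finset.mem_singleton]
    constructor
    · intro hm
      split_ifs at hm with h
      injection hm with h2; subst h2; exact ⟨h, rfl⟩
    · rintro ⟨h, rfl⟩; rw [if_neg h]
  rw [h, Finset.card_product, Finset.card_singleton, mul_one]
  have h2 := count_sub_lt' v₀ k (show k ≤ 2*k-1 by omega)
  have h3 := Finset.card_filter_add_card_filter_not (s := (univ : Finset (Fin (2*k-1))))
    (p := fun u : Fin (2*k-1) => ((v₀ - u : Fin (2*k-1)) : ℕ) < k)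
  rw [Finset.card_univ, Fintype.card_fin] at h3
  omega
end


section
open Finset
variable {V : Type*} [Fintype V] [DecidableEq V] {G : SimpleGraph V} [Fintype G.edgeSet]

omit [Fintype V] in
lemma outDeg_eq_card (D : GraphOrientation G) (v : V) [DecidableEq G.edgeSet] :
    D.outDeg v = (univ.filter (fun e : G.edgeSet => D.tail e = v)).card := by
  classical
  rw [GraphOrientation.outDeg, Set.ncard_eq_toFinset_card']
  congr 1
  ext e; simp

lemma sum_outDeg (D : GraphOrientation G) :
    ∑ v : V, D.outDeg v = Fintype.card G.edgeSet := by
  classical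
  simp_rw [outDeg_eq_card]
  rw [← Finset.card_univ, Finset.card_eq_sum_card_fiberwise (f := D.tail)
    (fun e _ => mem_univ _)]
end

open Finset in
/-- For every `k ≥ 1`, the complete bipartite graph `K_{2k−1,2k−1}` has proper
orientation number exactly `k`: there is a proper orientation in which every vertex of
one part has out-degree `k` and every vertex of the other part has out-degree `k − 1`,
and no proper orientation has maximum out-degree less than `k`. -/
theorem properOrientNum_completeBipartite (k : ℕ) (hk : 1 ≤ k) :
    properOrientNum (completeBipartiteGraph (Fin (2 * k - 1)) (Fin (2 * k - 1))) = k ∧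
    (∃ D : GraphOrientation (completeBipartiteGraph (Fin (2 * k - 1)) (Fin (2 * k - 1))),
      D.Proper ∧ (∀ u : Fin (2 * k - 1), D.outDeg (Sum.inl u) = k) ∧
        (∀ v : Fin (2 * k - 1), D.outDeg (Sum.inr v) = k - 1)) ∧
    (∀ D : GraphOrientation (completeBipartiteGraph (Fin (2 * k - 1)) (Fin (2 * k - 1))),
      D.Proper → k ≤ D.maxOutDeg) := by
  classical
  have hn : 1 ≤ 2 * k - 1 := by omega
  haveI : NeZero (2 * k - 1) := ⟨by omega⟩
  have hl := bD_outDeg_inl k hk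
  have hr := bD_outDeg_inr k hk
  have hprop : (bD k).Proper := by
    rintro (u | v) (u' | v') hadj <;> simp only [completeBipartiteGraph_adj] at hadj
    · simp at hadj
    · rw [hl, hr]; omega
    · rw [hl, hr]; omega
    · simp at hadj
  have hmax : (bD k).maxOutDeg = k := by
    apply le_antisymm
    · apply Finset.sup_le
      rintro (u | v) _
      · rw [hl]
      · rw [hr]; omega
    · have h := Finset.le_sup (f := (bD k).outDeg)
        (mem_univ (Sum.inl (⟨0, by omega⟩ : Fin (2*k-1))))
      rw [hl] at h
      exact h
  have hlow : ∀ D : GraphOrientation (completeBipartiteGraph (Fin (2*k-1)) (Fin (2*k-1))),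
      D.Proper → k ≤ D.maxOutDeg := by
    intro D hD
    by_contra hcon
    push_neg at hcon
    rw [GraphOrientation.maxOutDeg] at hcon
    have hb : ∀ x, D.outDeg x ≤ k - 1 := by
      intro x
      have h1 := Finset.le_sup (f := D.outDeg) (mem_univ x)
      omega
    have hsum : ∑ x, D.outDeg x = ∑ x, (bD k).outDeg x := by
      rw [sum_outDeg, sum_outDeg]
    rw [Fintype.sum_sum_type, Fintype.sum_sum_type] at hsum
    have hrhs : (∑ u : Fin (2*k-1), (bD k).outDeg (Sum.inl u))
        + (∑ v : Fin (2*k-1), (bD k).outDeg (Sum.inr v))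
        = (2*k-1) * k + (2*k-1) * (k-1) := by
      simp only [hl, hr, Finset.sum_const, Finset.card_univ, Fintype.card_fin, smul_eq_mul]
    obtain ⟨u₀, -, ha⟩ := Finset.exists_mem_eq_sup (univ : Finset (Fin (2*k-1)))
      univ_nonempty (fun u => D.outDeg (Sum.inl u))
    obtain ⟨v₀, -, hbv⟩ := Finset.exists_mem_eq_sup (univ : Finset (Fin (2*k-1)))
      univ_nonempty (fun v => D.outDeg (Sum.inr v))
    have hab : D.outDeg (Sum.inl u₀) ≠ D.outDeg (Sum.inr v₀) := hD (by simp)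
    have hsl : (∑ u : Fin (2*k-1), D.outDeg (Sum.inl u))
        ≤ (2*k-1) * D.outDeg (Sum.inl u₀) := by
      have h1 : (∑ u : Fin (2*k-1), D.outDeg (Sum.inl u))
          ≤ ∑ _u : Fin (2*k-1), D.outDeg (Sum.inl u₀) :=
        Finset.sum_le_sum (fun u _ => by
          rw [← ha]
          exact Finset.le_sup (f := fun u => D.outDeg (Sum.inl u)) (mem_univ u))
      simpa [mul_comm] using h1
    have hsr : (∑ v : Fin (2*k-1), D.outDeg (Sum.inr v))
        ≤ (2*k-1) * D.outDeg (Sum.inr v₀) := by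
      have h1 : (∑ v : Fin (2*k-1), D.outDeg (Sum.inr v))
          ≤ ∑ _v : Fin (2*k-1), D.outDeg (Sum.inr v₀) :=
        Finset.sum_le_sum (fun v _ => by
          rw [← hbv]
          exact Finset.le_sup (f := fun v => D.outDeg (Sum.inr v)) (mem_univ v))
      simpa [mul_comm] using h1
    have key0 : (2*k-1)*k + (2*k-1)*(k-1)
        ≤ (2*k-1) * D.outDeg (Sum.inl u₀) + (2*k-1) * D.outDeg (Sum.inr v₀) := by
      rw [← hrhs, ← hsum]
      exact Nat.add_le_add hsl hsr
    have key : k + (k-1) ≤ D.outDeg (Sum.inl u₀) + D.outDeg (Sum.inr v₀) := by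
      refine Nat.le_of_mul_le_mul_left ?_ (show 0 < 2*k-1 by omega)
      rw [Nat.mul_add, Nat.mul_add]
      exact key0
    have hu := hb (Sum.inl u₀)
    have hv := hb (Sum.inr v₀)
    omega
  refine ⟨?_, ⟨bD k, hprop, hl, hr⟩, hlow⟩
  have hmem : k ∈ {n : ℕ | ∃ D : GraphOrientation
      (completeBipartiteGraph (Fin (2*k-1)) (Fin (2*k-1))), D.Proper ∧ D.maxOutDeg = n} :=
    ⟨bD k, hprop, hmax⟩
  refine le_antisymm (Nat.sInf_le hmem) (le_csInf ⟨k, hmem⟩ ?_)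
  rintro m ⟨D, hD, rfl⟩
  exact hlow D hD
end
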